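/- Let N : ℤ^{≥0} × ℤ^{≥0} → ℚ satisfy N(0,0) = 0, N(1,0) = N(0,1) = 1 and the ℙ¹×ℙ¹ WDVV recursion. Let W, defined on triples (a,b,l) of nonnegative integers with (a,b) ≠ (0,0), satisfy: W(a,b,l) = W(b,a,l); W(1,b,l) = 1 for 0 ≤ l ≤ b; W(a,0,l) = 0 for a ≥ 2; W(a,b,l) = 0 whenever 2l > 2(a+b)−1; recursion (τ1a) at every (a,b,l) with l ≥ 1 and a+b−l ≥ 1; and recursion (τ1b) at every (a,b) with a ≥ 2, b ≥ 1. Then W(2,2,0) = 8, W(2,2,1) = 6, W(2,2,2) = 4, W(2,2,3) = 2, W(2,3,0) = 48, W(2,4,0) = 256, W(3,3,0) = 1086, and W(4,4,0) = 819200. -/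

import Mathlib

open Finset

/-- Binomial coefficient `C(n,k)` as a rational number, with the convention that
`C(n,k) = 0` whenever `k < 0` or `k > n`. -/
def binom (n k : ℤ) : ℚ :=
  if 0 ≤ k ∧ k ≤ n then (n.toNat.choose k.toNat : ℚ) else 0

/-- Quadruples `(a',b')` (recording `(a₀,b₀) = (a−2a', b−2b')`) with
`a₀ + 2a' = a`, `b₀ + 2b' = b`, `(a₀,b₀) ≠ (0,0)` and `(a',b') ≠ (0,0)`. -/
def quadHalf (a b : ℕ) : Finset (ℕ × ℕ) :=
  (Finset.range (a + 1) ×ˢ Finset.range (b + 1)).filter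
    fun p => 2 * p.1 ≤ a ∧ 2 * p.2 ≤ b ∧ 1 ≤ p.1 + p.2
      ∧ 1 ≤ (a - 2 * p.1) + (b - 2 * p.2)

/-- Splittings `((a₁,a₂),(b₁,b₂))` with `a₁+a₂ = a`, `b₁+b₂ = b`,
`(a₁,b₁) ≠ (0,0)` and `(a₂,b₂) ≠ (0,0)`. -/
def quadSum (a b : ℕ) : Finset ((ℕ × ℕ) × (ℕ × ℕ)) :=
  (Finset.HasAntidiagonal.antidiagonal a ×ˢ Finset.HasAntidiagonal.antidiagonal b).filter
    fun pq => 1 ≤ pq.1.1 + pq.2.1 ∧ 1 ≤ pq.1.2 + pq.2.2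

/-- The term `T₀ = −2^{l−3} a b N(a/2,b/2)` if `a` and `b` are both even and
`l = a+b−1`, and `0` otherwise; the power `2^{l−3}` is taken in `ℚ`. -/
def T0pr (N : ℕ → ℕ → ℚ) (a b l : ℕ) : ℚ :=
  if Even a ∧ Even b ∧ l + 1 = a + b then
    -((2 : ℚ) ^ ((l : ℤ) - 3)) * (a : ℚ) * (b : ℚ) * N (a / 2) (b / 2)
  else 0

/-- Recursion (τ1a) for the Welschinger invariants of `(ℙ¹×ℙ¹, τ₁,₁)`. -/
def RecT1a (N : ℕ → ℕ → ℚ) (W : ℕ → ℕ → ℕ → ℚ) (a b l : ℕ) : Prop :=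
  W a b l = T0pr N a b l
    - ∑ p ∈ quadHalf a b,
        (2 : ℚ) ^ (2 * (p.1 + p.2) - 1) * (p.1 : ℚ) * (p.2 : ℚ)
          * (((a - 2 * p.1 : ℕ) : ℚ) * (p.2 : ℚ) + ((b - 2 * p.2 : ℕ) : ℚ) * (p.1 : ℚ))
          * binom ((l : ℤ) - 1) (2 * ((p.1 : ℤ) + (p.2 : ℤ)) - 1)
          * N p.1 p.2 * W (a - 2 * p.1) (b - 2 * p.2) (l - 2 * (p.1 + p.2))
    + ∑ pq ∈ quadSum a b, ∑ r ∈ Finset.HasAntidiagonal.antidiagonal (l - 1),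
        (pq.2.1 : ℚ) * binom ((l : ℤ) - 1) (r.1 : ℤ)
          * ((pq.1.2 : ℚ)
                * binom (2 * ((a : ℤ) + (b : ℤ)) - 2 * (l : ℤ) - 2)
                    (2 * ((pq.1.1 : ℤ) + (pq.2.1 : ℤ)) - 2 * (r.1 : ℤ) - 2)
              - (pq.1.1 : ℚ)
                * binom (2 * ((a : ℤ) + (b : ℤ)) - 2 * (l : ℤ) - 2)
                    (2 * ((pq.1.1 : ℤ) + (pq.2.1 : ℤ)) - 2 * (r.1 : ℤ) - 1))
          * W pq.1.1 pq.2.1 r.1 * W pq.1.2 pq.2.2 r.2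

/-- Recursion (τ1b) for the purely real Welschinger invariants of
`(ℙ¹×ℙ¹, τ₁,₁)`. -/
def RecT1b (W : ℕ → ℕ → ℕ → ℚ) (a b : ℕ) : Prop :=
  W a b 0 = (1 / (2 * ((a : ℚ) - 1))) *
    ∑ pq ∈ (Finset.HasAntidiagonal.antidiagonal a ×ˢ Finset.HasAntidiagonal.antidiagonal (b + 1)).filter
        (fun pq => 1 ≤ pq.1.1 ∧ 1 ≤ pq.1.2 ∧ 1 ≤ pq.2.1 ∧ 1 ≤ pq.2.2),
      ((pq.2.1 : ℚ) * (pq.2.2 : ℚ)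
            * binom (2 * ((a : ℤ) + (b : ℤ)) - 2)
                (2 * ((pq.1.1 : ℤ) + (pq.2.1 : ℤ)) - 2)
          - (pq.2.1 : ℚ) ^ 2
            * binom (2 * ((a : ℤ) + (b : ℤ)) - 2)
                (2 * ((pq.1.1 : ℤ) + (pq.2.1 : ℤ)) - 1))
        * W pq.1.1 pq.2.1 0 * W pq.1.2 pq.2.2 0

/-- The conditions on the Welschinger invariants `W(a,b,l)` of `(ℙ¹×ℙ¹, τ₁,₁)`:
symmetry, base cases, dimension vanishing, and recursions (τ1a) and (τ1b). -/
def GoodWpr (N : ℕ → ℕ → ℚ) (W : ℕ → ℕ → ℕ → ℚ) : Prop :=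
  (∀ a b l : ℕ, 1 ≤ a + b → W a b l = W b a l)
    ∧ (∀ b l : ℕ, l ≤ b → W 1 b l = 1)
    ∧ (∀ a l : ℕ, 2 ≤ a → W a 0 l = 0)
    ∧ (∀ a b l : ℕ, 1 ≤ a + b → a + b ≤ l → W a b l = 0)
    ∧ (∀ a b l : ℕ, 1 ≤ l → l + 1 ≤ a + b → RecT1a N W a b l)
    ∧ (∀ a b : ℕ, 2 ≤ a → 1 ≤ b → RecT1b W a b)

/-- The complex WDVV recursion for the genus 0 Gromov-Witten invariants of `ℙ¹×ℙ¹`. -/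
def QuadRec (N : ℕ → ℕ → ℚ) : Prop :=
  ∀ a b : ℕ, 2 ≤ a + b →
    N a b = (1 / 2) *
      ∑ p ∈ Finset.HasAntidiagonal.antidiagonal a, ∑ q ∈ Finset.HasAntidiagonal.antidiagonal b,
        ((p.1 : ℚ) * (q.2 : ℚ) + (p.2 : ℚ) * (q.1 : ℚ)) * ((p.1 : ℚ) + (q.1 : ℚ))
          * (((p.2 : ℚ) + (q.2 : ℚ))
                * binom (2 * (a : ℤ) + 2 * (b : ℤ) - 4) (2 * (p.1 : ℤ) + 2 * (q.1 : ℤ) - 2)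
              - ((p.1 : ℚ) + (q.1 : ℚ))
                * binom (2 * (a : ℤ) + 2 * (b : ℤ) - 4) (2 * (p.1 : ℤ) + 2 * (q.1 : ℤ) - 1))
          * N p.1 q.1 * N p.2 q.2


theorem int_toNat_ofNat_lit (n : ℕ) [n.AtLeastTwo] :
    (no_index (OfNat.ofNat n : ℤ)).toNat = OfNat.ofNat n := rfl

/-- Low-degree values of the Welschinger invariants of `(ℙ¹×ℙ¹, τ₁,₁)`. -/
theorem stmt_11 (N : ℕ → ℕ → ℚ) (W : ℕ → ℕ → ℕ → ℚ)
    (h00 : N 0 0 = 0) (h10 : N 1 0 = 1) (h01 : N 0 1 = 1) (hN : QuadRec N)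
    (hW : GoodWpr N W) :
    W 2 2 0 = 8 ∧ W 2 2 1 = 6 ∧ W 2 2 2 = 4 ∧ W 2 2 3 = 2
      ∧ W 2 3 0 = 48 ∧ W 2 4 0 = 256 ∧ W 3 3 0 = 1086 ∧ W 4 4 0 = 819200 := by
  obtain ⟨hsym, hone, hzero, hvan, hA, hB⟩ := hW
  -- the Gromov-Witten invariant N(1,1)
  have n11 : N 1 1 = 1 := by
    have e := hN 1 1 (by norm_num)
    simp only [Finset.Nat.sum_antidiagonal_eq_sum_range_succ_mk, Finset.sum_range_succ,
      Finset.sum_range_zero] at e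
    norm_num [binom, Int.toNat_natCast, int_toNat_ofNat_lit, Nat.choose, h00, h10, h01] at e
    exact e
  -- base values of W
  have w100 : W 1 0 0 = 1 := hone 0 0 le_rfl
  have w110 : W 1 1 0 = 1 := hone 1 0 (by norm_num)
  have w111 : W 1 1 1 = 1 := hone 1 1 le_rfl
  have w120 : W 1 2 0 = 1 := hone 2 0 (by norm_num)
  have w121 : W 1 2 1 = 1 := hone 2 1 (by norm_num)
  have w122 : W 1 2 2 = 1 := hone 2 2 le_rfl
  have w130 : W 1 3 0 = 1 := hone 3 0 (by norm_num)
  have w140 : W 1 4 0 = 1 := hone 4 0 (by norm_num)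
  have w010 : W 0 1 0 = 1 := (hsym 0 1 0 (by norm_num)).trans w100
  have w210 : W 2 1 0 = 1 := (hsym 2 1 0 (by norm_num)).trans w120
  have w211 : W 2 1 1 = 1 := (hsym 2 1 1 (by norm_num)).trans w121
  have w212 : W 2 1 2 = 1 := (hsym 2 1 2 (by norm_num)).trans w122
  have w310 : W 3 1 0 = 1 := (hsym 3 1 0 (by norm_num)).trans w130
  have w20 : ∀ l, W 2 0 l = 0 := fun l => hzero 2 l le_rfl
  have w02 : ∀ l, W 0 2 l = 0 := fun l => (hsym 0 2 l (by norm_num)).trans (w20 l)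
  have w101 : W 1 0 1 = 0 := hvan 1 0 1 (by norm_num) (by norm_num)
  have w102 : W 1 0 2 = 0 := hvan 1 0 2 (by norm_num) (by norm_num)
  have w011 : W 0 1 1 = 0 := (hsym 0 1 1 (by norm_num)).trans w101
  have w012 : W 0 1 2 = 0 := (hsym 0 1 2 (by norm_num)).trans w102
  have w112 : W 1 1 2 = 0 := hvan 1 1 2 (by norm_num) (by norm_num)
  -- purely real values via recursion (τ1b)
  have w220 : W 2 2 0 = 8 := by
    have e := hB 2 2 (by norm_num) (by norm_num)
    simp only [RecT1b, Finset.sum_filter, Finset.sum_product,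
      Finset.Nat.sum_antidiagonal_eq_sum_range_succ_mk, Finset.sum_range_succ,
      Finset.sum_range_zero] at e
    norm_num [binom, Int.toNat_natCast, int_toNat_ofNat_lit, Nat.choose, w110, w120, w210] at e
    exact e
  have w230 : W 2 3 0 = 48 := by
    have e := hB 2 3 (by norm_num) (by norm_num)
    simp only [RecT1b, Finset.sum_filter, Finset.sum_product,
      Finset.Nat.sum_antidiagonal_eq_sum_range_succ_mk, Finset.sum_range_succ,
      Finset.sum_range_zero] at e
    norm_num [binom, Int.toNat_natCast, int_toNat_ofNat_lit, Nat.choose, w110, w120, w130] at e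
    exact e
  have w240 : W 2 4 0 = 256 := by
    have e := hB 2 4 (by norm_num) (by norm_num)
    simp only [RecT1b, Finset.sum_filter, Finset.sum_product,
      Finset.Nat.sum_antidiagonal_eq_sum_range_succ_mk, Finset.sum_range_succ,
      Finset.sum_range_zero] at e
    norm_num [binom, Int.toNat_natCast, int_toNat_ofNat_lit, Nat.choose, w110, w120, w130, w140] at e
    exact e
  have w320 : W 3 2 0 = 48 := (hsym 3 2 0 (by norm_num)).trans w230
  have w330 : W 3 3 0 = 1086 := by
    have e := hB 3 3 (by norm_num) (by norm_num)
    simp only [RecT1b, Finset.sum_filter, Finset.sum_product,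
      Finset.Nat.sum_antidiagonal_eq_sum_range_succ_mk, Finset.sum_range_succ,
      Finset.sum_range_zero] at e
    norm_num [binom, Int.toNat_natCast, int_toNat_ofNat_lit, Nat.choose, w110, w120, w130, w210, w220, w230] at e
    exact e
  have w340 : W 3 4 0 = 18424 := by
    have e := hB 3 4 (by norm_num) (by norm_num)
    simp only [RecT1b, Finset.sum_filter, Finset.sum_product,
      Finset.Nat.sum_antidiagonal_eq_sum_range_succ_mk, Finset.sum_range_succ,
      Finset.sum_range_zero] at e
    norm_num [binom, Int.toNat_natCast, int_toNat_ofNat_lit, Nat.choose, w110, w120, w130, w140,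
      w210, w220, w230, w240] at e
    exact e
  have w440 : W 4 4 0 = 819200 := by
    have e := hB 4 4 (by norm_num) (by norm_num)
    simp only [RecT1b, Finset.sum_filter, Finset.sum_product,
      Finset.Nat.sum_antidiagonal_eq_sum_range_succ_mk, Finset.sum_range_succ,
      Finset.sum_range_zero] at e
    norm_num [binom, Int.toNat_natCast, int_toNat_ofNat_lit, Nat.choose, w110, w120, w130, w140,
      w210, w220, w230, w240, w310, w320, w330, w340] at e
    exact e
  -- values with conjugate pairs via recursion (τ1a)
  have w221 : W 2 2 1 = 6 := by
    have e := hA 2 2 1 (by norm_num) (by norm_num)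
    simp only [RecT1a, quadHalf, quadSum, T0pr, Finset.sum_filter, Finset.sum_product,
      Finset.Nat.sum_antidiagonal_eq_sum_range_succ_mk, Finset.sum_range_succ,
      Finset.sum_range_zero] at e
    norm_num [binom, Int.toNat_natCast, int_toNat_ofNat_lit, Nat.choose, h10, h01, w110, w120, w210, w010,
      w100, w02, w20, w220] at e
    exact e
  have w222 : W 2 2 2 = 4 := by
    have e := hA 2 2 2 (by norm_num) (by norm_num)
    simp only [RecT1a, quadHalf, quadSum, T0pr, Finset.sum_filter, Finset.sum_product,
      Finset.Nat.sum_antidiagonal_eq_sum_range_succ_mk, Finset.sum_range_succ,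
      Finset.sum_range_zero] at e
    norm_num [binom, Int.toNat_natCast, int_toNat_ofNat_lit, Nat.choose, h10, h01, w110, w111, w120, w121,
      w210, w211, w010, w011, w100, w101, w02, w20, w220, w221] at e
    exact e
  have w223 : W 2 2 3 = 2 := by
    have e := hA 2 2 3 (by norm_num) (by norm_num)
    simp only [RecT1a, quadHalf, quadSum, T0pr, Finset.sum_filter, Finset.sum_product,
      Finset.Nat.sum_antidiagonal_eq_sum_range_succ_mk, Finset.sum_range_succ,
      Finset.sum_range_zero] at e
    norm_num [binom, Int.toNat_natCast, int_toNat_ofNat_lit, Nat.choose, h10, h01, n11, w110, w111, w112,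
      w120, w121, w122, w210, w211, w212, w010, w011, w012, w100, w101, w102,
      w02, w20, w220, w221, w222] at e
    exact e
  exact ⟨w220, w221, w222, w223, w230, w240, w330, w440⟩
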